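/- Suppose each bad event B has P_Ω(B) ≤ p, each bad event is dependent with at most d events (including itself), and e·p·d ≤ 1 (the symmetric LLL criterion). Then W' = Σ_{B∈𝓑} (1/P_Ω(B)) Σ_{τ∈Γ(B)} w(τ) ≤ m·e, where m is the number of bad events. -/

import Mathlib

open scoped BigOperators ENNReal Classical

namespace LLL

/-- Two bad events are dependent iff their variable sets intersect. -/
def Dep {n : ℕ} {E : Type} (S : E → Finset (Fin n)) (b b' : E) : Prop :=
  (S b ∩ S b').Nonempty

/-- A witness DAG: a finite DAG with nodes labeled by bad events, where any two
nodes with dependent labels are joined by an edge (in one direction), and nodes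
with non-dependent labels have no edge. -/
structure WDag (n : ℕ) (E : Type) (S : E → Finset (Fin n)) where
  size : ℕ
  label : Fin size → E
  edge : Fin size → Fin size → Prop
  acyclic : ∀ v, ¬ Relation.TransGen edge v v
  edge_dep : ∀ v w, edge v w → Dep S (label v) (label w)
  dep_edge : ∀ v w, v ≠ w → Dep S (label v) (label w) → edge v w ∨ edge w v

namespace WDag

variable {n : ℕ} {E : Type} {S : E → Finset (Fin n)}

/-- Isomorphism of witness DAGs. -/
def Iso (G G' : WDag n E S) : Prop :=
  ∃ e : Fin G.size ≃ Fin G'.size,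
    (∀ v, G'.label (e v) = G.label v) ∧ ∀ v w, G'.edge (e v) (e w) ↔ G.edge v w

theorem Iso.refl (G : WDag n E S) : Iso G G :=
  ⟨Equiv.refl _, fun _ => rfl, fun _ _ => Iff.rfl⟩

theorem Iso.symm {G G' : WDag n E S} (h : Iso G G') : Iso G' G := by
  obtain ⟨e, hl, he⟩ := h
  refine ⟨e.symm, fun v => ?_, fun v w => ?_⟩
  · simpa using (hl (e.symm v)).symm
  · simpa using (he (e.symm v) (e.symm w)).symm

theorem Iso.trans {G₁ G₂ G₃ : WDag n E S} (h12 : Iso G₁ G₂) (h23 : Iso G₂ G₃) :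
    Iso G₁ G₃ := by
  obtain ⟨e, hl, he⟩ := h12
  obtain ⟨f, hl', he'⟩ := h23
  refine ⟨e.trans f, fun v => ?_, fun v w => ?_⟩
  · rw [Equiv.trans_apply, hl' (e v), hl v]
  · rw [Equiv.trans_apply, Equiv.trans_apply, he' (e v) (e w), he v w]

instance wdSetoid (n : ℕ) (E : Type) (S : E → Finset (Fin n)) : Setoid (WDag n E S) :=
  ⟨Iso, ⟨Iso.refl, Iso.symm, Iso.trans⟩⟩

/-- Isomorphism classes of witness DAGs. -/
def WClass (n : ℕ) (E : Type) (S : E → Finset (Fin n)) : Type :=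
  Quotient (wdSetoid n E S)

/-- The weight of a witness DAG: the product of the probabilities of its labels. -/
noncomputable def wt (P : E → ℝ) (G : WDag n E S) : ℝ := ∏ v, P (G.label v)

theorem wt_invariant (P : E → ℝ) {G G' : WDag n E S} (h : Iso G G') :
    wt P G = wt P G' := by
  obtain ⟨e, hl, _⟩ := h
  exact Fintype.prod_equiv e (fun v => P (G.label v)) (fun v => P (G'.label v))
    (fun v => by show P (G.label v) = P (G'.label (e v)); rw [hl v])

/-- The weight, as a function on isomorphism classes. -/
noncomputable def cwt (P : E → ℝ) : WClass n E S → ℝ :=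
  Quotient.lift (wt P) fun _ _ h => wt_invariant P h

theorem size_invariant {G G' : WDag n E S} (h : Iso G G') : G.size = G'.size := by
  obtain ⟨e, -, -⟩ := h
  simpa using Fintype.card_congr e

/-- The adjusted weight `a_ρ(G) = w(G) (1+ρ)^{|G|}`. -/
noncomputable def awt (P : E → ℝ) (ρ : ℝ) (G : WDag n E S) : ℝ :=
  wt P G * (1 + ρ) ^ G.size

theorem awt_invariant (P : E → ℝ) (ρ : ℝ) {G G' : WDag n E S} (h : Iso G G') :
    awt P ρ G = awt P ρ G' := by
  unfold awt
  rw [wt_invariant P h, size_invariant h]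

/-- The adjusted weight, as a function on isomorphism classes. -/
noncomputable def cawt (P : E → ℝ) (ρ : ℝ) : WClass n E S → ℝ :=
  Quotient.lift (awt P ρ) fun _ _ h => awt_invariant P ρ h

/-- A node is a sink if it has no outgoing edge. -/
def IsSink (G : WDag n E S) (v : Fin G.size) : Prop := ∀ w, ¬ G.edge v w

/-- A witness DAG has a single sink. -/
def SingleSink (G : WDag n E S) : Prop := ∃! v, IsSink G v

/-- A witness DAG has a single sink, labeled by `b`. -/
def SinkLabeled (G : WDag n E S) (b : E) : Prop :=
  ∃ v, IsSink G v ∧ G.label v = b ∧ ∀ w, IsSink G w → w = v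

end WDag

/-- A set of bad events is independent if no two distinct members are dependent. -/
def Indep {n : ℕ} {E : Type} (S : E → Finset (Fin n)) (I : Finset E) : Prop :=
  ∀ b ∈ I, ∀ b' ∈ I, b ≠ b' → ¬ Dep S b b'

/-- The independent-set polynomial `Q(I,p)`. -/
noncomputable def Q {n : ℕ} {E : Type} [Fintype E] (S : E → Finset (Fin n))
    (p : E → ℝ) (I : Finset E) : ℝ :=
  ∑ J ∈ Finset.univ.filter (fun J : Finset E => I ⊆ J ∧ Indep S J),
    (-1 : ℝ) ^ (J.card - I.card) * ∏ b ∈ J, p b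

/-- The Shearer criterion for the probability vector `p`. -/
def Shearer {n : ℕ} {E : Type} [Fintype E] (S : E → Finset (Fin n)) (p : E → ℝ) : Prop :=
  0 < Q S p ∅ ∧ ∀ I : Finset E, Indep S I → 0 ≤ Q S p I


section Aux
open WDag

variable {n : ℕ} {E : Type} {S : E → Finset (Fin n)}

theorem dep_symm {b b' : E} (h : Dep S b b') : Dep S b' b := by
  unfold Dep at *; rwa [Finset.inter_comm]

theorem wf_edge (G : WDag n E S) : WellFounded (fun w v => G.edge v w) := by
  have hirr : ∀ v, ¬ Relation.TransGen (fun w v => G.edge v w) v v := by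
    intro v h
    exact G.acyclic v ((Relation.transGen_swap).mp h)
  haveI : IsIrrefl (Fin G.size) (Relation.TransGen fun w v => G.edge v w) := ⟨hirr⟩
  haveI : IsTrans (Fin G.size) (Relation.TransGen fun w v => G.edge v w) :=
    ⟨fun _ _ _ h1 h2 => h1.trans h2⟩
  exact Subrelation.wf (r := Relation.TransGen fun w v => G.edge v w)
    (fun h => Relation.TransGen.single h)
    (Finite.wellFounded_of_trans_of_irrefl _)

noncomputable def depth (G : WDag n E S) : Fin G.size → ℕ :=
  (wf_edge G).fix (fun v ih =>
    (Finset.univ.filter (G.edge v)).attach.sup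
      (fun w => ih w.1 (Finset.mem_filter.mp w.2).2 + 1))

theorem depth_eq (G : WDag n E S) (v : Fin G.size) :
    depth G v = (Finset.univ.filter (G.edge v)).attach.sup (fun w => depth G w.1 + 1) := by
  unfold depth
  exact WellFounded.fix_eq (wf_edge G) _ v

theorem depth_lt {G : WDag n E S} {v w : Fin G.size} (h : G.edge v w) :
    depth G w < depth G v := by
  have hmem : w ∈ Finset.univ.filter (G.edge v) := by simp [h]
  have h2 := Finset.le_sup
    (f := fun w : {x // x ∈ Finset.univ.filter (G.edge v)} => depth G ↑w + 1)
    (Finset.mem_attach _ ⟨w, hmem⟩)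
  have h3 : depth G w + 1 ≤ depth G v := by
    rw [depth_eq G v]; exact h2
  omega

theorem depth_eq_zero_iff {G : WDag n E S} {v : Fin G.size} :
    depth G v = 0 ↔ IsSink G v := by
  constructor
  · intro h w hw
    have := depth_lt hw
    omega
  · intro h
    rw [depth_eq]
    have : Finset.univ.filter (G.edge v) = ∅ := by
      rw [Finset.filter_eq_empty_iff]; intro w _; exact h w
    rw [this]
    simp

theorem exists_edge_depth {G : WDag n E S} {v : Fin G.size} {k : ℕ} (h : depth G v = k + 1) :
    ∃ w, G.edge v w ∧ depth G w = k := by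
  rw [depth_eq] at h
  have hne : (Finset.univ.filter (G.edge v)).attach.Nonempty := by
    by_contra hc
    rw [Finset.not_nonempty_iff_eq_empty] at hc
    rw [hc] at h
    simp at h
  obtain ⟨w, _, hw⟩ := Finset.exists_mem_eq_sup _ hne
    (fun w : {x // x ∈ Finset.univ.filter (G.edge v)} => depth G w.1 + 1)
  rw [hw] at h
  exact ⟨w.1, (Finset.mem_filter.mp w.2).2, by omega⟩

/-- In a WD with a unique sink, label and depth determine the node. -/
theorem eq_of_label_depth {G : WDag n E S}
    (huniq : ∀ v w : Fin G.size, IsSink G v → IsSink G w → v = w)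
    {v w : Fin G.size} (hl : G.label v = G.label w) (hd : depth G v = depth G w) : v = w := by
  by_contra hne
  by_cases hdep : Dep S (G.label v) (G.label w)
  · rcases G.dep_edge v w hne hdep with h | h
    · have := depth_lt h; omega
    · have := depth_lt h; omega
  · have hS : S (G.label w) = ∅ := by
      rw [hl] at hdep
      by_contra hc
      obtain ⟨x, hx⟩ := Finset.nonempty_iff_ne_empty.mpr hc
      exact hdep ⟨x, Finset.mem_inter.mpr ⟨hx, hx⟩⟩
    have hsv : IsSink G v := by
      intro u hu
      obtain ⟨x, hx⟩ := G.edge_dep v u hu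
      rw [hl, hS] at hx
      simp at hx
    have hsw : IsSink G w := by
      intro u hu
      obtain ⟨x, hx⟩ := G.edge_dep w u hu
      rw [hS] at hx
      simp at hx
    exact hne (huniq v w hsv hsw)

theorem edge_iff (G : WDag n E S) (v w : Fin G.size) :
    G.edge v w ↔ Dep S (G.label v) (G.label w) ∧ depth G w < depth G v := by
  constructor
  · intro h
    exact ⟨G.edge_dep v w h, depth_lt h⟩
  · rintro ⟨hdep, hlt⟩
    have hne : v ≠ w := by rintro rfl; omega
    rcases G.dep_edge v w hne hdep with h | h
    · exact h
    · have := depth_lt h; omega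

noncomputable def layer (G : WDag n E S) (i : ℕ) : Finset E :=
  (Finset.univ.filter (fun v => depth G v = i)).image G.label

theorem mem_layer {G : WDag n E S} {i : ℕ} {b : E} :
    b ∈ layer G i ↔ ∃ v, depth G v = i ∧ G.label v = b := by
  simp [layer, Finset.mem_image, Finset.mem_filter]

noncomputable def height (G : WDag n E S) : ℕ := Finset.univ.sup (depth G)

theorem depth_le_height (G : WDag n E S) (v : Fin G.size) : depth G v ≤ height G :=
  Finset.le_sup (Finset.mem_univ v)

theorem layer_empty {G : WDag n E S} {i : ℕ} (h : height G < i) : layer G i = ∅ := by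
  rw [Finset.eq_empty_iff_forall_notMem]
  intro b hb
  obtain ⟨v, hv, -⟩ := mem_layer.mp hb
  have := depth_le_height G v
  omega

theorem exists_depth_le {G : WDag n E S} :
    ∀ (k : ℕ) (v : Fin G.size), depth G v = k → ∀ i, i ≤ k → ∃ w, depth G w = i := by
  intro k
  induction k with
  | zero => intro v hv i hi; exact ⟨v, by omega⟩
  | succ k ih =>
    intro v hv i hi
    rcases Nat.eq_or_lt_of_le hi with rfl | h
    · exact ⟨v, hv⟩
    · obtain ⟨w, -, hw⟩ := exists_edge_depth hv
      exact ih w hw i (by omega)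

theorem exists_depth {G : WDag n E S} (h0 : 0 < G.size) {i : ℕ} (hi : i ≤ height G) :
    ∃ v, depth G v = i := by
  have hne : (Finset.univ : Finset (Fin G.size)).Nonempty := by
    exact ⟨⟨0, h0⟩, Finset.mem_univ _⟩
  obtain ⟨v0, -, hv0⟩ := Finset.exists_mem_eq_sup _ hne (depth G)
  exact exists_depth_le (height G) v0 hv0.symm i hi

noncomputable def layers (G : WDag n E S) : List (Finset E) :=
  (List.range (height G + 1)).map (layer G)

theorem depth_le_of_iso {G G' : WDag n E S} (e : Fin G.size ≃ Fin G'.size)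
    (he : ∀ v w, G'.edge (e v) (e w) ↔ G.edge v w) :
    ∀ (k : ℕ) (v : Fin G.size), depth G v ≤ k → depth G' (e v) ≤ k := by
  intro k
  induction k with
  | zero =>
    intro v hv
    have hs : IsSink G v := depth_eq_zero_iff.mp (by omega)
    have : IsSink G' (e v) := by
      intro w' hw'
      have := (he v (e.symm w')).mp (by simpa using hw')
      exact hs _ this
    rw [depth_eq_zero_iff.mpr this]
  | succ k ih =>
    intro v hv
    rw [depth_eq]
    apply Finset.sup_le
    rintro ⟨w', hw'⟩ -
    have hew' : G'.edge (e v) w' := (Finset.mem_filter.mp hw').2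
    have hedge : G.edge v (e.symm w') := (he v (e.symm w')).mp (by simpa using hew')
    have h1 : depth G (e.symm w') + 1 ≤ depth G v := depth_lt hedge
    have h2 : depth G' (e (e.symm w')) ≤ k := ih (e.symm w') (by omega)
    simpa using Nat.add_le_add_right (by simpa using h2) 1

theorem depth_iso {G G' : WDag n E S} (e : Fin G.size ≃ Fin G'.size)
    (he : ∀ v w, G'.edge (e v) (e w) ↔ G.edge v w) (v : Fin G.size) :
    depth G' (e v) = depth G v := by
  have he' : ∀ v w : Fin G'.size, G.edge (e.symm v) (e.symm w) ↔ G'.edge v w := by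
    intro v w
    simpa using (he (e.symm v) (e.symm w)).symm
  apply le_antisymm
  · exact depth_le_of_iso e he (depth G v) v le_rfl
  · have := depth_le_of_iso e.symm he' (depth G' (e v)) (e v) le_rfl
    simpa using this

theorem layers_iso {G G' : WDag n E S} (h : Iso G G') : layers G = layers G' := by
  obtain ⟨e, hl, he⟩ := h
  have hlayer : ∀ i, layer G i = layer G' i := by
    intro i
    ext b
    rw [mem_layer, mem_layer]
    constructor
    · rintro ⟨v, hv, rfl⟩
      exact ⟨e v, by rw [depth_iso e he]; exact hv, hl v⟩
    · rintro ⟨v', hv', rfl⟩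
      refine ⟨e.symm v', ?_, ?_⟩
      · have hd := depth_iso e he (e.symm v')
        simp only [Equiv.apply_symm_apply] at hd
        omega
      · have := hl (e.symm v')
        simp only [Equiv.apply_symm_apply] at this
        exact this.symm
  have hheight : height G = height G' := by
    apply le_antisymm
    · apply Finset.sup_le
      intro v _
      rw [← depth_iso e he v]
      exact depth_le_height _ _
    · apply Finset.sup_le
      intro v' _
      have hd := depth_iso e he (e.symm v')
      simp only [Equiv.apply_symm_apply] at hd
      rw [hd]
      exact depth_le_height _ _
  unfold layers
  rw [hheight]
  congr 1
  funext i
  exact hlayer i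

theorem layers_get {G : WDag n E S} {i : ℕ} (hi : i < height G + 1) :
    (layers G).get ⟨i, by simpa [layers] using hi⟩ = layer G i := by
  simp [layers]

/-- Reconstruction: two unique-sink WDs with the same layers are isomorphic. -/
theorem iso_of_layers_eq {G G' : WDag n E S}
    (hu : ∀ v w : Fin G.size, IsSink G v → IsSink G w → v = w)
    (hu' : ∀ v w : Fin G'.size, IsSink G' v → IsSink G' w → v = w)
    (h : layers G = layers G') : Iso G G' := by
  have hlen : height G = height G' := by
    have := congrArg List.length h
    simpa [layers] using this
  have hlayer : ∀ i, layer G i = layer G' i := by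
    intro i
    by_cases hi : i ≤ height G
    · have h1 : i < height G + 1 := by omega
      have h2 : i < height G' + 1 := by omega
      rw [← layers_get (G := G) h1, ← layers_get (G := G') h2]
      exact List.get_of_eq h _
    · rw [layer_empty (by omega), layer_empty (by omega : height G' < i)]
  -- existence of partner nodes
  have hex : ∀ v : Fin G.size, ∃ v' : Fin G'.size,
      depth G' v' = depth G v ∧ G'.label v' = G.label v := by
    intro v
    have : G.label v ∈ layer G (depth G v) := mem_layer.mpr ⟨v, rfl, rfl⟩
    rw [hlayer] at this
    obtain ⟨v', h1, h2⟩ := mem_layer.mp this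
    exact ⟨v', h1, h2⟩
  have hex' : ∀ v' : Fin G'.size, ∃ v : Fin G.size,
      depth G v = depth G' v' ∧ G.label v = G'.label v' := by
    intro v'
    have : G'.label v' ∈ layer G' (depth G' v') := mem_layer.mpr ⟨v', rfl, rfl⟩
    rw [← hlayer] at this
    obtain ⟨v, h1, h2⟩ := mem_layer.mp this
    exact ⟨v, h1, h2⟩
  classical
  let f : Fin G.size → Fin G'.size := fun v => (hex v).choose
  let g : Fin G'.size → Fin G.size := fun v' => (hex' v').choose
  have hf : ∀ v, depth G' (f v) = depth G v ∧ G'.label (f v) = G.label v :=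
    fun v => (hex v).choose_spec
  have hg : ∀ v', depth G (g v') = depth G' v' ∧ G.label (g v') = G'.label v' :=
    fun v' => (hex' v').choose_spec
  have hgf : ∀ v, g (f v) = v := by
    intro v
    apply eq_of_label_depth hu
    · rw [(hg (f v)).2, (hf v).2]
    · rw [(hg (f v)).1, (hf v).1]
  have hfg : ∀ v', f (g v') = v' := by
    intro v'
    apply eq_of_label_depth hu'
    · rw [(hf (g v')).2, (hg v').2]
    · rw [(hf (g v')).1, (hg v').1]
  refine ⟨⟨f, g, hgf, hfg⟩, fun v => (hf v).2, fun v w => ?_⟩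
  rw [edge_iff G', edge_iff G]
  simp only [Equiv.coe_fn_mk]
  rw [(hf v).2, (hf w).2, (hf v).1, (hf w).1]

theorem layer_zero {G : WDag n E S} {b : E} (h : SinkLabeled G b) : layer G 0 = {b} := by
  obtain ⟨v0, hs, hlab, huniq⟩ := h
  ext b'
  rw [mem_layer, Finset.mem_singleton]
  constructor
  · rintro ⟨v, hv, rfl⟩
    have : IsSink G v := depth_eq_zero_iff.mp hv
    rw [huniq v this]
    exact hlab
  · rintro rfl
    exact ⟨v0, depth_eq_zero_iff.mpr hs, hlab⟩

/-- The validity predicate for layer sequences. -/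
def ValidFrom (S : E → Finset (Fin n)) : Finset E → List (Finset E) → Prop
  | _, [] => True
  | I, J :: t => J.Nonempty ∧ (∀ b' ∈ J, ∃ b ∈ I, Dep S b b') ∧ ValidFrom S J t

theorem validFrom_aux (G : WDag n E S) (h0 : 0 < G.size) :
    ∀ (m j : ℕ), j + m ≤ height G →
      ValidFrom S (layer G j) ((List.range m).map (fun i => layer G (j + 1 + i))) := by
  intro m
  induction m with
  | zero => intro j _; simp [ValidFrom]
  | succ m ih =>
    intro j hj
    rw [List.range_succ_eq_map, List.map_cons, List.map_map]
    refine ⟨?_, ?_, ?_⟩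
    · obtain ⟨v, hv⟩ := exists_depth h0 (i := j + 1) (by omega)
      exact ⟨G.label v, mem_layer.mpr ⟨v, by omega, rfl⟩⟩
    · intro b' hb'
      obtain ⟨v, hv, rfl⟩ := mem_layer.mp hb'
      have hv' : depth G v = j + 1 := by omega
      obtain ⟨w, hew, hdw⟩ := exists_edge_depth hv'
      exact ⟨G.label w, mem_layer.mpr ⟨w, hdw, rfl⟩, dep_symm (G.edge_dep v w hew)⟩
    · have hfun : ((fun i => layer G (j + 1 + i)) ∘ Nat.succ) =
          (fun i => layer G (j + 1 + 1 + i)) := by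
        funext i
        simp only [Function.comp]
        congr 1
        omega
      rw [hfun]
      exact ih (j + 1) (by omega)

theorem layers_eq_cons (G : WDag n E S) :
    layers G = layer G 0 :: (List.range (height G)).map (fun i => layer G (0 + 1 + i)) := by
  unfold layers
  rw [List.range_succ_eq_map, List.map_cons, List.map_map]
  have : (layer G ∘ Nat.succ) = fun i => layer G (0 + 1 + i) := by
    funext i
    simp only [Function.comp]
    congr 1
    omega
  rw [this]

theorem validFrom_layers_tail (G : WDag n E S) (h0 : 0 < G.size) {b : E}
    (hb : SinkLabeled G b) : ValidFrom S {b} ((layers G).tail) := by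
  rw [layers_eq_cons]
  simp only [List.tail_cons]
  have := validFrom_aux G h0 (height G) 0 (by omega)
  rwa [layer_zero hb] at this

/-- The ENNReal weight of a layer list. -/
noncomputable def gE (P : E → ℝ) (l : List (Finset E)) : ℝ≥0∞ :=
  (l.map (fun J => ∏ b ∈ J, ENNReal.ofReal (P b))).prod

theorem gE_nil (P : E → ℝ) : gE P ([] : List (Finset E)) = 1 := rfl

theorem gE_cons (P : E → ℝ) (J : Finset E) (t : List (Finset E)) :
    gE P (J :: t) = (∏ b ∈ J, ENNReal.ofReal (P b)) * gE P t := by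
  simp [gE]

theorem prod_map_range {M : Type*} [CommMonoid M] (f : ℕ → M) (m : ℕ) :
    ((List.range m).map f).prod = ∏ i ∈ Finset.range m, f i := by
  induction m with
  | zero => simp
  | succ m ih => rw [List.range_succ, List.map_append, List.prod_append,
      Finset.prod_range_succ, ih]; simp

theorem gE_layers {P : E → ℝ} {G : WDag n E S}
    (hu : ∀ v w : Fin G.size, IsSink G v → IsSink G w → v = w) :
    gE P (layers G) = ∏ v : Fin G.size, ENNReal.ofReal (P (G.label v)) := by
  unfold gE layers
  rw [List.map_map, prod_map_range]
  have hmaps : ∀ v : Fin G.size, v ∈ Finset.univ → depth G v ∈ Finset.range (height G + 1) := by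
    intro v _
    rw [Finset.mem_range]
    have := depth_le_height G v
    omega
  rw [← Finset.prod_fiberwise_of_maps_to hmaps (fun v => ENNReal.ofReal (P (G.label v)))]
  apply Finset.prod_congr rfl
  intro i _
  simp only [Function.comp]
  unfold layer
  rw [Finset.prod_image]
  intro v hv w hw hl
  exact eq_of_label_depth hu hl (by
    rw [(Finset.mem_filter.mp hv).2, (Finset.mem_filter.mp hw).2])

theorem ofReal_wt {P : E → ℝ} (hP0 : ∀ b, 0 ≤ P b) (G : WDag n E S) :
    ENNReal.ofReal (wt P G) = ∏ v : Fin G.size, ENNReal.ofReal (P (G.label v)) := by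
  unfold wt
  rw [ENNReal.ofReal_prod_of_nonneg (fun v _ => hP0 _)]

theorem one_le_eE : (1 : ℝ≥0∞) ≤ ENNReal.ofReal (Real.exp 1) := by
  rw [ENNReal.one_le_ofReal]
  have := Real.add_one_le_exp 1
  linarith

theorem prod_biUnion_le {α β : Type*} [DecidableEq β] (s : Finset α) (t : α → Finset β)
    (f : β → ℝ≥0∞) (hf : ∀ x, 1 ≤ f x) :
    ∏ x ∈ s.biUnion t, f x ≤ ∏ a ∈ s, ∏ x ∈ t a, f x := by
  classical
  induction s using Finset.induction_on with
  | empty => simp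
  | @insert a s ha ih =>
    rw [Finset.biUnion_insert, Finset.prod_insert ha]
    calc ∏ x ∈ t a ∪ s.biUnion t, f x
        ≤ (∏ x ∈ t a ∪ s.biUnion t, f x) * ∏ x ∈ t a ∩ s.biUnion t, f x := by
          exact le_mul_of_one_le_right' (Finset.one_le_prod' (fun x _ => hf x))
      _ = (∏ x ∈ t a, f x) * ∏ x ∈ s.biUnion t, f x := Finset.prod_union_inter
      _ ≤ (∏ x ∈ t a, f x) * ∏ a ∈ s, ∏ x ∈ t a, f x := by
          exact mul_le_mul_right ih _

section PartB

variable [Fintype E]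

theorem base_pow_le (p : ℝ) (d : ℕ) (hp0 : 0 ≤ p) (hlll : Real.exp 1 * p * d ≤ 1) :
    (ENNReal.ofReal p * ENNReal.ofReal (Real.exp 1) + 1) ^ d ≤ ENNReal.ofReal (Real.exp 1) := by
  have he : (0:ℝ) < Real.exp 1 := Real.exp_pos 1
  have hnn : (0:ℝ) ≤ p * Real.exp 1 + 1 := by positivity
  have hre : (p * Real.exp 1 + 1) ^ d ≤ Real.exp 1 := by
    have h1 : p * Real.exp 1 + 1 ≤ Real.exp (p * Real.exp 1) := Real.add_one_le_exp _
    have h2 : (p * Real.exp 1 + 1) ^ d ≤ (Real.exp (p * Real.exp 1)) ^ d :=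
      pow_le_pow_left₀ hnn h1 d
    have h3 : (Real.exp (p * Real.exp 1)) ^ d = Real.exp (d * (p * Real.exp 1)) :=
      (Real.exp_nat_mul _ d).symm
    have h4 : (d : ℝ) * (p * Real.exp 1) ≤ 1 := by
      have : (d : ℝ) * (p * Real.exp 1) = Real.exp 1 * p * d := by ring
      rw [this]; exact hlll
    calc (p * Real.exp 1 + 1) ^ d ≤ (Real.exp (p * Real.exp 1)) ^ d := h2
      _ = Real.exp (d * (p * Real.exp 1)) := h3
      _ ≤ Real.exp 1 := Real.exp_le_exp.mpr h4
  calc (ENNReal.ofReal p * ENNReal.ofReal (Real.exp 1) + 1) ^ d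
      = ENNReal.ofReal (p * Real.exp 1 + 1) ^ d := by
        congr 1
        rw [← ENNReal.ofReal_mul hp0, ← ENNReal.ofReal_one,
          ← ENNReal.ofReal_add (by positivity) (by norm_num)]
    _ = ENNReal.ofReal ((p * Real.exp 1 + 1) ^ d) := (ENNReal.ofReal_pow hnn d).symm
    _ ≤ ENNReal.ofReal (Real.exp 1) := ENNReal.ofReal_le_ofReal hre

theorem sum_valid_le (P : E → ℝ) (p : ℝ) (d : ℕ) (hp0 : 0 ≤ p)
    (hp : ∀ b, P b ≤ p)
    (hdep : ∀ b : E, (Finset.univ.filter fun b' => Dep S b b').card ≤ d)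
    (hlll : Real.exp 1 * p * d ≤ 1) :
    ∀ (k : ℕ) (I : Finset E) (F : Finset (List (Finset E))),
      (∀ l ∈ F, ValidFrom S I l ∧ l.length ≤ k) →
      ∑ l ∈ F, gE P l ≤ ENNReal.ofReal (Real.exp 1) ^ I.card := by
  classical
  set e' : ℝ≥0∞ := ENNReal.ofReal (Real.exp 1) with he'
  set f : E → ℝ≥0∞ := fun b => ENNReal.ofReal (P b) with hf
  have hfp : ∀ b, f b ≤ ENNReal.ofReal p := fun b => ENNReal.ofReal_le_ofReal (hp b)
  intro k
  induction k with
  | zero =>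
    intro I F hF
    have hsub : F ⊆ {[]} := by
      intro l hl
      have := (hF l hl).2
      rw [Finset.mem_singleton]
      exact List.length_eq_zero_iff.mp (by omega)
    calc ∑ l ∈ F, gE P l ≤ ∑ l ∈ ({[]} : Finset (List (Finset E))), gE P l :=
          Finset.sum_le_sum_of_subset hsub
      _ = 1 := by simp [gE_nil]
      _ = 1 ^ I.card := (one_pow _).symm
      _ ≤ e' ^ I.card := pow_le_pow_left' one_le_eE _
  | succ k ih =>
    intro I F hF
    set D : Finset E := Finset.univ.filter (fun b' => ∃ b ∈ I, Dep S b b') with hD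
    set T : Finset E → Finset (List (Finset E)) :=
      fun J => (F.filter (fun l => l.head? = some J)).image List.tail with hT
    set X : Finset (List (Finset E)) :=
      (D.powerset.erase ∅).biUnion (fun J => (T J).image (J :: ·)) with hX
    have hsub : F ⊆ insert [] X := by
      intro l hl
      rcases l with _ | ⟨J, t⟩
      · exact Finset.mem_insert_self _ _
      · apply Finset.mem_insert_of_mem
        obtain ⟨⟨hJne, hJstep, -⟩, -⟩ := hF _ hl
        rw [hX, Finset.mem_biUnion]
        refine ⟨J, ?_, ?_⟩
        · rw [Finset.mem_erase, Finset.mem_powerset]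
          refine ⟨Finset.nonempty_iff_ne_empty.mp hJne, ?_⟩
          intro b' hb'
          rw [hD, Finset.mem_filter]
          exact ⟨Finset.mem_univ _, hJstep b' hb'⟩
        · rw [Finset.mem_image]
          refine ⟨t, ?_, rfl⟩
          rw [hT, Finset.mem_image]
          exact ⟨J :: t, Finset.mem_filter.mpr ⟨hl, rfl⟩, rfl⟩
    have hnotin : ([] : List (Finset E)) ∉ X := by
      rw [hX]
      intro hmem
      rw [Finset.mem_biUnion] at hmem
      obtain ⟨J, -, hmem⟩ := hmem
      rw [Finset.mem_image] at hmem
      obtain ⟨t, -, ht⟩ := hmem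
      exact List.cons_ne_nil J t ht
    have hdisj : (↑(D.powerset.erase ∅) : Set (Finset E)).PairwiseDisjoint
        (fun J => (T J).image (J :: ·)) := by
      intro J1 _ J2 _ hne
      simp only [Function.onFun]
      rw [Finset.disjoint_left]
      intro l h1 h2
      rw [Finset.mem_image] at h1 h2
      obtain ⟨t1, -, h1⟩ := h1
      obtain ⟨t2, -, h2⟩ := h2
      have h3 := h1.trans h2.symm
      injection h3 with hh _
      exact hne hh
    have hTvalid : ∀ J ∈ D.powerset.erase ∅, ∀ t ∈ T J, ValidFrom S J t ∧ t.length ≤ k := by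
      intro J _ t ht
      rw [hT, Finset.mem_image] at ht
      obtain ⟨l, hl, htl⟩ := ht
      rw [Finset.mem_filter] at hl
      obtain ⟨hlF, hlhead⟩ := hl
      rcases l with _ | ⟨J', t'⟩
      · simp at hlhead
      · have hJ' : J' = J := by simpa using hlhead
        subst hJ'
        have htt : t = t' := htl.symm
        subst htt
        obtain ⟨⟨-, -, hv⟩, hlen⟩ := hF _ hlF
        refine ⟨hv, ?_⟩
        simp at hlen
        omega
    calc ∑ l ∈ F, gE P l
        ≤ ∑ l ∈ insert [] X, gE P l := Finset.sum_le_sum_of_subset hsub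
      _ = 1 + ∑ l ∈ X, gE P l := by rw [Finset.sum_insert hnotin, gE_nil]
      _ = 1 + ∑ J ∈ D.powerset.erase ∅, ∑ l ∈ (T J).image (J :: ·), gE P l := by
          rw [hX, Finset.sum_biUnion hdisj]
      _ ≤ 1 + ∑ J ∈ D.powerset.erase ∅, ∏ b ∈ J, (f b * e') := by
          apply add_le_add_right
          apply Finset.sum_le_sum
          intro J hJ
          have hinj : Function.Injective (J :: ·) := fun a b h => by
            simpa using h
          rw [Finset.sum_image (fun a _ b _ h => hinj h)]
          have : ∀ t ∈ T J, gE P (J :: t) = (∏ b ∈ J, f b) * gE P t := by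
            intro t _
            rw [gE_cons]
          rw [Finset.sum_congr rfl this, ← Finset.mul_sum]
          have hIH : ∑ t ∈ T J, gE P t ≤ e' ^ J.card :=
            ih J (T J) (hTvalid J hJ)
          calc (∏ b ∈ J, f b) * ∑ t ∈ T J, gE P t
              ≤ (∏ b ∈ J, f b) * e' ^ J.card := mul_le_mul_right hIH _
            _ = ∏ b ∈ J, (f b * e') := by
                rw [Finset.prod_mul_distrib, Finset.prod_const]
      _ = ∑ J ∈ D.powerset, ∏ b ∈ J, (f b * e') := by
          rw [← Finset.sum_erase_add D.powerset _ (Finset.empty_mem_powerset D)]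
          rw [Finset.prod_empty, add_comm]
      _ = ∏ b ∈ D, (f b * e' + 1) := by
          rw [Finset.prod_add]
          apply Finset.sum_congr rfl
          intro J _
          simp
      _ ≤ ∏ b ∈ I, ∏ b' ∈ Finset.univ.filter (fun b' => Dep S b b'), (f b' * e' + 1) := by
          have hDb : D = I.biUnion (fun b => Finset.univ.filter (fun b' => Dep S b b')) := by
            ext b'
            simp [hD]
          rw [hDb]
          exact prod_biUnion_le _ _ _ (fun x => le_add_self)
      _ ≤ ∏ b ∈ I, e' := by
          apply Finset.prod_le_prod'
          intro b _
          calc ∏ b' ∈ Finset.univ.filter (fun b' => Dep S b b'), (f b' * e' + 1)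
              ≤ ∏ b' ∈ Finset.univ.filter (fun b' => Dep S b b'),
                  (ENNReal.ofReal p * e' + 1) := by
                apply Finset.prod_le_prod'
                intro b' _
                exact add_le_add_left (mul_le_mul_left (hfp b') _) 1
            _ = (ENNReal.ofReal p * e' + 1) ^
                  (Finset.univ.filter (fun b' => Dep S b b')).card := Finset.prod_const _
            _ ≤ (ENNReal.ofReal p * e' + 1) ^ d := pow_le_pow_right' le_add_self (hdep b)
            _ ≤ e' := base_pow_le p d hp0 hlll
      _ = e' ^ I.card := Finset.prod_const _

end PartB

noncomputable def layersC : WClass n E S → List (Finset E) :=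
  Quotient.lift layers (fun _ _ h => layers_iso h)

theorem layersC_mk (G : WDag n E S) :
    layersC (Quotient.mk (wdSetoid n E S) G) = layers G := rfl

theorem huniq_of_sinkLabeled {G : WDag n E S} {b : E} (hsl : SinkLabeled G b) :
    ∀ v w : Fin G.size, IsSink G v → IsSink G w → v = w := by
  obtain ⟨v0, hs, hl, hu⟩ := hsl
  intro v w hv hw
  rw [hu v hv, hu w hw]

theorem layers_cons_of_sinkLabeled {G : WDag n E S} {b : E} (hsl : SinkLabeled G b) :
    layers G = {b} :: (layers G).tail := by
  conv_lhs => rw [layers_eq_cons G, layer_zero hsl]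
  rw [layers_eq_cons G]
  simp

section Final

variable [Fintype E]

theorem inner_le (P : E → ℝ) (hP0 : ∀ b, 0 ≤ P b) (p : ℝ) (d : ℕ) (hp0 : 0 ≤ p)
    (hp : ∀ b, P b ≤ p)
    (hdep : ∀ b : E, (Finset.univ.filter fun b' => Dep S b b').card ≤ d)
    (hlll : Real.exp 1 * p * d ≤ 1) (b : E) :
    (∑' τ : {c : WClass n E S //
        ∃ G : WDag n E S, Quotient.mk (wdSetoid n E S) G = c ∧ SinkLabeled G b},
      ENNReal.ofReal (cwt P τ.1))
      ≤ ENNReal.ofReal (P b) * ENNReal.ofReal (Real.exp 1) := by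
  classical
  have key : ∀ τ : {c : WClass n E S //
      ∃ G : WDag n E S, Quotient.mk (wdSetoid n E S) G = c ∧ SinkLabeled G b},
      ENNReal.ofReal (cwt P τ.1) = ENNReal.ofReal (P b) * gE P ((layersC τ.1).tail) ∧
        ValidFrom S {b} ((layersC τ.1).tail) := by
    rintro ⟨c, G, rfl, hsl⟩
    have h0 : 0 < G.size := by
      obtain ⟨v0, -, -, -⟩ := hsl
      exact v0.pos
    have hu := huniq_of_sinkLabeled hsl
    constructor
    · have h1 : cwt P (Quotient.mk (wdSetoid n E S) G) = wt P G := rfl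
      rw [h1, layersC_mk, ofReal_wt hP0 G, ← gE_layers hu]
      conv_lhs => rw [layers_cons_of_sinkLabeled hsl]
      rw [gE_cons]
      simp
    · rw [layersC_mk]
      exact validFrom_layers_tail G h0 hsl
  set χ : {c : WClass n E S //
      ∃ G : WDag n E S, Quotient.mk (wdSetoid n E S) G = c ∧ SinkLabeled G b} →
      {l : List (Finset E) // ValidFrom S {b} l} :=
    fun τ => ⟨(layersC τ.1).tail, (key τ).2⟩ with hχ
  have hχinj : Function.Injective χ := by
    rintro ⟨c1, h1⟩ ⟨c2, h2⟩ hch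
    have ht : (layersC c1).tail = (layersC c2).tail := congrArg Subtype.val hch
    obtain ⟨G1, rfl, hsl1⟩ := h1
    obtain ⟨G2, rfl, hsl2⟩ := h2
    rw [layersC_mk, layersC_mk] at ht
    have hlay : layers G1 = layers G2 := by
      rw [layers_cons_of_sinkLabeled hsl1, layers_cons_of_sinkLabeled hsl2, ht]
    apply Subtype.ext
    exact Quotient.sound (iso_of_layers_eq (huniq_of_sinkLabeled hsl1)
      (huniq_of_sinkLabeled hsl2) hlay)
  have htsum : ∑' l : {l : List (Finset E) // ValidFrom S {b} l}, gE P l.1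
      ≤ ENNReal.ofReal (Real.exp 1) ^ ({b} : Finset E).card := by
    rw [ENNReal.tsum_eq_iSup_sum]
    apply iSup_le
    intro s
    have hs : ∑ x ∈ s, gE P x.1 = ∑ l ∈ s.image Subtype.val, gE P l :=
      (Finset.sum_image (fun a _ c _ h => Subtype.ext h)).symm
    rw [hs]
    exact sum_valid_le P p d hp0 hp hdep hlll ((s.image Subtype.val).sup List.length)
      {b} _ (by
        intro l hl
        obtain ⟨x, -, rfl⟩ := Finset.mem_image.mp hl
        exact ⟨x.2, Finset.le_sup hl⟩)
  calc ∑' τ : {c : WClass n E S //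
        ∃ G : WDag n E S, Quotient.mk (wdSetoid n E S) G = c ∧ SinkLabeled G b},
        ENNReal.ofReal (cwt P τ.1)
      = ∑' τ, (ENNReal.ofReal (P b) * gE P ((χ τ).1)) := tsum_congr (fun τ => (key τ).1)
    _ = ENNReal.ofReal (P b) * ∑' τ, gE P ((χ τ).1) := ENNReal.tsum_mul_left
    _ ≤ ENNReal.ofReal (P b) * ∑' l : {l : List (Finset E) // ValidFrom S {b} l}, gE P l.1 :=
        mul_le_mul_right (ENNReal.tsum_comp_le_tsum_of_injective hχinj (fun l => gE P l.1)) _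
    _ ≤ ENNReal.ofReal (P b) * ENNReal.ofReal (Real.exp 1) ^ ({b} : Finset E).card :=
        mul_le_mul_right htsum _
    _ = ENNReal.ofReal (P b) * ENNReal.ofReal (Real.exp 1) := by simp

end Final

end Aux

/-- Under the symmetric LLL criterion e·p·d ≤ 1, the parameter
W' = Σ_B (1/P(B)) Σ_{τ ∈ Γ(B)} w(τ) is at most m·e. -/
theorem stmt9 {n : ℕ} {E : Type} [Fintype E] (S : E → Finset (Fin n)) (P : E → ℝ)
    (hP0 : ∀ b, 0 ≤ P b) (hP1 : ∀ b, P b ≤ 1)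
    (p : ℝ) (d : ℕ) (hp : ∀ b, P b ≤ p)
    (hdep : ∀ b : E, (Finset.univ.filter fun b' => Dep S b b').card ≤ d)
    (hlll : Real.exp 1 * p * d ≤ 1) :
    ∑ b : E, ENNReal.ofReal (P b)⁻¹ *
        ∑' τ : {c : WDag.WClass n E S //
          ∃ G : WDag n E S, Quotient.mk (WDag.wdSetoid n E S) G = c ∧ WDag.SinkLabeled G b},
          ENNReal.ofReal (WDag.cwt P τ.1)
      ≤ ENNReal.ofReal ((Fintype.card E : ℝ) * Real.exp 1) := by
  classical
  by_cases hE : Nonempty E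
  · obtain ⟨b0⟩ := hE
    have hp0 : 0 ≤ p := le_trans (hP0 b0) (hp b0)
    have hbound : ∀ b : E, ENNReal.ofReal (P b)⁻¹ *
        (∑' τ : {c : WDag.WClass n E S //
          ∃ G : WDag n E S, Quotient.mk (WDag.wdSetoid n E S) G = c ∧ WDag.SinkLabeled G b},
          ENNReal.ofReal (WDag.cwt P τ.1)) ≤ ENNReal.ofReal (Real.exp 1) := by
      intro b
      refine le_trans (mul_le_mul_right (inner_le P hP0 p d hp0 hp hdep hlll b) _) ?_
      rw [← mul_assoc]
      have h2 : ENNReal.ofReal (P b)⁻¹ * ENNReal.ofReal (P b) ≤ 1 := by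
        rw [← ENNReal.ofReal_mul (inv_nonneg.mpr (hP0 b))]
        apply ENNReal.ofReal_le_one.mpr
        rcases eq_or_lt_of_le (hP0 b) with h | h
        · rw [← h]
          norm_num
        · rw [inv_mul_cancel₀ (ne_of_gt h)]
      calc ENNReal.ofReal (P b)⁻¹ * ENNReal.ofReal (P b) * ENNReal.ofReal (Real.exp 1)
          ≤ 1 * ENNReal.ofReal (Real.exp 1) := mul_le_mul_left h2 _
        _ = ENNReal.ofReal (Real.exp 1) := one_mul _
    refine le_trans (Finset.sum_le_sum (fun b _ => hbound b)) ?_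
    rw [Finset.sum_const, Finset.card_univ, nsmul_eq_mul,
      ENNReal.ofReal_mul (Nat.cast_nonneg _), ENNReal.ofReal_natCast]
  · haveI := not_nonempty_iff.mp hE
    rw [Finset.univ_eq_empty, Finset.sum_empty]
    exact zero_le

end LLL
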